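/- Let t : Fin n → A × B with n ≥ 1 model a bag relation. If the average of pdep(t_σ) over all n! permutations σ of Fin n equals 1, then t satisfies the FD X→Y. (Well-definedness of the measure μ.) -/

import Mathlib

namespace AFD

open Finset

variable {A B : Type*}

/-- Number of indices with X-value `a`. -/
def c1 {n : ℕ} [DecidableEq A] (t : Fin n → A × B) (a : A) : ℕ :=
  (Finset.univ.filter fun i => (t i).1 = a).card

/-- Number of indices with Y-value `b`. -/
def c2 {n : ℕ} [DecidableEq B] (t : Fin n → A × B) (b : B) : ℕ :=
  (Finset.univ.filter fun i => (t i).2 = b).card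

/-- Number of indices with tuple value `(a, b)`. -/
def cnt {n : ℕ} [DecidableEq A] [DecidableEq B] (t : Fin n → A × B) (a : A) (b : B) : ℕ :=
  (Finset.univ.filter fun i => t i = (a, b)).card

/-- Marginal probability of X-value `a`. -/
noncomputable def p1 {n : ℕ} [DecidableEq A] (t : Fin n → A × B) (a : A) : ℝ :=
  (c1 t a : ℝ) / n

/-- Marginal probability of Y-value `b`. -/
noncomputable def p2 {n : ℕ} [DecidableEq B] (t : Fin n → A × B) (b : B) : ℝ :=
  (c2 t b : ℝ) / n

/-- Joint probability of `(a, b)`. -/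
noncomputable def pJ {n : ℕ} [DecidableEq A] [DecidableEq B] (t : Fin n → A × B)
    (a : A) (b : B) : ℝ :=
  (cnt t a b : ℝ) / n

/-- Conditional probability of Y-value `b` given X-value `a` (with the `0/0 = 0` convention,
which is automatic for real division in Lean). -/
noncomputable def pC {n : ℕ} [DecidableEq A] [DecidableEq B] (t : Fin n → A × B)
    (a : A) (b : B) : ℝ :=
  pJ t a b / p1 t a

/-- The set of distinct X-values. -/
def domX {n : ℕ} [DecidableEq A] (t : Fin n → A × B) : Finset A :=
  Finset.univ.image fun i => (t i).1

/-- The set of distinct Y-values. -/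
def domY {n : ℕ} [DecidableEq B] (t : Fin n → A × B) : Finset B :=
  Finset.univ.image fun i => (t i).2

/-- The set of distinct tuples. -/
def domXY {n : ℕ} [DecidableEq A] [DecidableEq B] (t : Fin n → A × B) : Finset (A × B) :=
  Finset.univ.image t

/-- The probabilistic dependency `pdep(X → Y)`. -/
noncomputable def pdep {n : ℕ} [DecidableEq A] [DecidableEq B] (t : Fin n → A × B) : ℝ :=
  ∑ a ∈ domX t, p1 t a * ∑ b ∈ domY t, (pC t a b) ^ 2

/-- The probabilistic self-dependency `pdep(Y)`. -/
noncomputable def pdepY {n : ℕ} [DecidableEq B] (t : Fin n → A × B) : ℝ :=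
  ∑ b ∈ domY t, (p2 t b) ^ 2

/-- The (X;Y)-permutation of `t` induced by the permutation `σ`. -/
def permRel {n : ℕ} (t : Fin n → A × B) (σ : Equiv.Perm (Fin n)) : Fin n → A × B :=
  fun i => ((t i).1, (t (σ i)).2)

/-- `t` satisfies the functional dependency X → Y. -/
def satFD {n : ℕ} (t : Fin n → A × B) : Prop :=
  ∀ i j, (t i).1 = (t j).1 → (t i).2 = (t j).2

set_option linter.unusedSectionVars false

section Aux
variable [DecidableEq A] [DecidableEq B] {n : ℕ}

lemma cnt_sum (t : Fin n → A × B) (a : A) :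
    ∑ b ∈ domY t, cnt t a b = c1 t a := by
  rw [c1, Finset.card_eq_sum_card_fiberwise
    (f := fun i => (t i).2) (t := domY t)
    (fun i _ => Finset.mem_image_of_mem _ (Finset.mem_univ i))]
  refine Finset.sum_congr rfl fun b _ => ?_
  rw [cnt, Finset.filter_filter]
  congr 1
  ext i
  simp [Prod.ext_iff]

lemma c1_sum (t : Fin n → A × B) : ∑ a ∈ domX t, c1 t a = n := by
  have := Finset.card_eq_sum_card_fiberwise
    (s := (Finset.univ : Finset (Fin n))) (f := fun i => (t i).1) (t := domX t)
    (fun i _ => Finset.mem_image_of_mem _ (Finset.mem_univ i))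
  simpa [c1] using this.symm

lemma p1_pos (t : Fin n → A × B) {a : A} (hn : 1 ≤ n) (ha : a ∈ domX t) :
    0 < p1 t a := by
  obtain ⟨i, _, hi⟩ := Finset.mem_image.mp ha
  have : 0 < c1 t a := Finset.card_pos.mpr ⟨i, by simp [c1, hi]⟩
  have hn' : (0:ℝ) < n := by exact_mod_cast hn
  exact div_pos (by exact_mod_cast this) hn'

lemma pC_nonneg (t : Fin n → A × B) (a : A) (b : B) : 0 ≤ pC t a b := by
  unfold pC pJ p1; positivity

lemma pC_le_one (t : Fin n → A × B) (a : A) (b : B) : pC t a b ≤ 1 := by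
  have hle : cnt t a b ≤ c1 t a := by
    apply Finset.card_le_card
    intro i hi
    simp only [Finset.mem_filter, Finset.mem_univ, true_and] at hi ⊢
    rw [hi]
  have h1 : pJ t a b ≤ p1 t a := by
    unfold pJ p1
    gcongr ?_ / _
    exact_mod_cast hle
  have h2 : 0 ≤ p1 t a := by unfold p1; positivity
  exact div_le_one_of_le₀ h1 h2

lemma sum_pC (t : Fin n → A × B) {a : A} (hn : 1 ≤ n) (ha : a ∈ domX t) :
    ∑ b ∈ domY t, pC t a b = 1 := by
  have hp := p1_pos t hn ha
  unfold pC
  rw [← Finset.sum_div]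
  rw [div_eq_one_iff_eq hp.ne']
  unfold pJ p1
  rw [← Finset.sum_div, ← Nat.cast_sum, cnt_sum]

lemma sum_p1 (t : Fin n → A × B) (hn : 1 ≤ n) : ∑ a ∈ domX t, p1 t a = 1 := by
  unfold p1
  rw [← Finset.sum_div, ← Nat.cast_sum, c1_sum, div_self]
  exact_mod_cast Nat.pos_of_ne_zero (by omega) |>.ne'

lemma inner_le_one (t : Fin n → A × B) {a : A} (hn : 1 ≤ n) (ha : a ∈ domX t) :
    ∑ b ∈ domY t, (pC t a b) ^ 2 ≤ 1 := by
  calc ∑ b ∈ domY t, (pC t a b) ^ 2 ≤ ∑ b ∈ domY t, pC t a b := by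
        refine Finset.sum_le_sum fun b _ => ?_
        nlinarith [pC_nonneg t a b, pC_le_one t a b]
    _ = 1 := sum_pC t hn ha

lemma pdep_le_one (t : Fin n → A × B) (hn : 1 ≤ n) : pdep t ≤ 1 := by
  calc pdep t ≤ ∑ a ∈ domX t, p1 t a * 1 := by
        refine Finset.sum_le_sum fun a ha => ?_
        exact mul_le_mul_of_nonneg_left (inner_le_one t hn ha) (p1_pos t hn ha).le
    _ = 1 := by simp [sum_p1 t hn]

lemma pdep_lt_one (t : Fin n → A × B) (hn : 1 ≤ n) (hFD : ¬ (∀ i j, (t i).1 = (t j).1 → (t i).2 = (t j).2)) :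
    pdep t < 1 := by
  push_neg at hFD
  obtain ⟨i, j, hij, hb⟩ := hFD
  set a := (t i).1 with ha_def
  have ha : a ∈ domX t := Finset.mem_image_of_mem _ (Finset.mem_univ i)
  have hbY : (t i).2 ∈ domY t := Finset.mem_image_of_mem _ (Finset.mem_univ i)
  -- 0 < pC t a (t i).2 < 1
  have hcnt_pos : 0 < cnt t a (t i).2 :=
    Finset.card_pos.mpr ⟨i, by simp [cnt]; rfl⟩
  have hcnt_lt : cnt t a (t i).2 < c1 t a := by
    have hsub : (Finset.univ.filter fun k => t k = (a, (t i).2)) ⊆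
        (Finset.univ.filter fun k => (t k).1 = a) := by
      intro k hk
      simp only [Finset.mem_filter, Finset.mem_univ, true_and] at hk ⊢
      rw [hk]
    refine Finset.card_lt_card ⟨hsub, fun hsup => ?_⟩
    have hj : j ∈ (Finset.univ.filter fun k => (t k).1 = a) := by
      simp [hij.symm]
    have := hsup hj
    simp only [Finset.mem_filter, Finset.mem_univ, true_and] at this
    exact hb (by rw [this])
  have hn' : (0:ℝ) < n := by exact_mod_cast hn
  have hp1 := p1_pos t hn ha
  have hpC_pos : 0 < pC t a (t i).2 := by
    apply div_pos _ hp1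
    unfold pJ
    positivity
  have hpC_lt : pC t a (t i).2 < 1 := by
    rw [pC, div_lt_one hp1]
    unfold pJ p1
    gcongr ?_ / _
    exact_mod_cast hcnt_lt
  have hinner : ∑ b ∈ domY t, (pC t a b) ^ 2 < 1 := by
    calc ∑ b ∈ domY t, (pC t a b) ^ 2 < ∑ b ∈ domY t, pC t a b := by
          refine Finset.sum_lt_sum (fun b _ => by nlinarith [pC_nonneg t a b, pC_le_one t a b])
            ⟨(t i).2, hbY, by nlinarith⟩
      _ = 1 := sum_pC t hn ha
  calc pdep t < ∑ a' ∈ domX t, p1 t a' * 1 := by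
        refine Finset.sum_lt_sum (fun a' ha' =>
          mul_le_mul_of_nonneg_left (inner_le_one t hn ha') (p1_pos t hn ha').le)
          ⟨a, ha, by nlinarith [inner_le_one t hn ha]⟩
    _ = 1 := by simp [sum_p1 t hn]

end Aux

/-- Well-definedness of the measure μ: if the expected probabilistic dependency under
random (X;Y)-permutations is 1, then the FD X→Y is satisfied. -/
theorem satFD_of_expected_pdep_eq_one {A B : Type*} [DecidableEq A] [DecidableEq B]
    {n : ℕ} (hn : 1 ≤ n) (t : Fin n → A × B)
    (h : (∑ σ : Equiv.Perm (Fin n), pdep (permRel t σ)) / (n.factorial : ℝ) = 1) :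
    satFD t := by
  by_contra hFD
  have hid : permRel t 1 = t := by
    funext i; simp [permRel]
  have hlt : pdep (permRel t 1) < 1 := by
    rw [hid]; exact pdep_lt_one t hn hFD
  have hsum : (∑ σ : Equiv.Perm (Fin n), pdep (permRel t σ)) <
      ∑ _σ : Equiv.Perm (Fin n), (1 : ℝ) := by
    refine Finset.sum_lt_sum (fun σ _ => pdep_le_one (permRel t σ) hn)
      ⟨1, Finset.mem_univ _, hlt⟩
  have hcard : (∑ _σ : Equiv.Perm (Fin n), (1 : ℝ)) = (n.factorial : ℝ) := by
    simp [Finset.card_univ, Fintype.card_perm, Fintype.card_fin]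
  have hfac : (0:ℝ) < (n.factorial : ℝ) := by exact_mod_cast n.factorial_pos
  have : (∑ σ : Equiv.Perm (Fin n), pdep (permRel t σ)) / (n.factorial : ℝ) < 1 := by
    rw [div_lt_one hfac]; rw [hcard] at hsum; exact hsum
  linarith [h, this]


end AFD
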